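/- Let m > 0 and let w, a, b, y be complex numbers with 1/m ≤ |e^{w}| ≤ m and |y| ≤ 1/3. Then |e^{−2w}·a|² + |e^{2w}·(b − y²·a)|² ≥ (3/(4m⁴))·(|a|² + |b|²). -/

import Mathlib

lemma lift_key (A B C t : ℝ) (hA : 0 ≤ A) (hB : 0 ≤ B) (hC : 0 ≤ C) (ht : 0 ≤ t)
    (h : B ≤ C + t) (h9 : 9 * t ≤ A) :
    3 / 4 * (A ^ 2 + B ^ 2) ≤ A ^ 2 + C ^ 2 := by
  rcases le_or_gt B (A / 3) with hc | hc
  · nlinarith [sq_nonneg C, mul_le_mul hc hc hB (by linarith)]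
  · have hBt : 0 ≤ B - t := by linarith
    have hCB : B - t ≤ C := by linarith
    have hsq : (B - t) ^ 2 ≤ C ^ 2 := pow_le_pow_left₀ hBt hCB 2
    nlinarith [hsq, sq_nonneg (A - B), mul_nonneg hB ht,
      mul_le_mul_of_nonneg_left (show t ≤ A / 9 by linarith) hB]

/-- If `1/m ≤ |e^{w}| ≤ m` and `|y| ≤ 1/3`, then
`|e^{−2w}a|² + |e^{2w}(b − y²a)|² ≥ (3/(4m⁴))(|a|² + |b|²)`. -/
theorem lift_metric_estimate (m : ℝ) (hm : 0 < m) (w a b y : ℂ)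
    (h1 : 1 / m ≤ ‖Complex.exp w‖)
    (h2 : ‖Complex.exp w‖ ≤ m)
    (hy : ‖y‖ ≤ 1 / 3) :
    3 / (4 * m ^ 4) * (‖a‖ ^ 2 + ‖b‖ ^ 2) ≤
      ‖Complex.exp (-(2 * w)) * a‖ ^ 2 +
        ‖Complex.exp (2 * w) * (b - y ^ 2 * a)‖ ^ 2 := by
  set r := ‖Complex.exp w‖ with hr_def
  have hr : 0 < r := norm_pos_iff.mpr (Complex.exp_ne_zero w)
  have e2w : Complex.exp (2 * w) = Complex.exp w ^ 2 := by
    rw [← Complex.exp_nat_mul]; norm_num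
  have eabs2 : ‖Complex.exp (2 * w)‖ = r ^ 2 := by
    rw [e2w, norm_pow]
  have eabsneg : ‖Complex.exp (-(2 * w))‖ = (r ^ 2)⁻¹ := by
    rw [Complex.exp_neg, norm_inv, eabs2]
  set A := ‖a‖ with hA_def
  set B := ‖b‖ with hB_def
  set C := ‖b - y ^ 2 * a‖ with hC_def
  have hA : 0 ≤ A := norm_nonneg a
  have hB : 0 ≤ B := norm_nonneg b
  have hC : 0 ≤ C := norm_nonneg _
  have ht0 : 0 ≤ ‖y‖ ^ 2 * A := by positivity
  have htri : B ≤ C + ‖y‖ ^ 2 * A := by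
    calc B = ‖b - y ^ 2 * a + y ^ 2 * a‖ := by ring_nf; rfl
    _ ≤ C + ‖y ^ 2 * a‖ := norm_add_le _ _
    _ = C + ‖y‖ ^ 2 * A := by rw [norm_mul, norm_pow]
  have h9 : 9 * (‖y‖ ^ 2 * A) ≤ A := by
    have : ‖y‖ ^ 2 ≤ 1 / 9 := by nlinarith [norm_nonneg y]
    nlinarith
  have key : 3 / 4 * (A ^ 2 + B ^ 2) ≤ A ^ 2 + C ^ 2 :=
    lift_key A B C _ hA hB hC ht0 htri h9
  rw [norm_mul, norm_mul, eabs2, eabsneg]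
  have hm2 : (1 : ℝ) / m ^ 2 ≤ r ^ 2 := by
    have : (1 / m) ^ 2 ≤ r ^ 2 := pow_le_pow_left₀ (by positivity) h1 2
    calc (1 : ℝ) / m ^ 2 = (1 / m) ^ 2 := by ring
    _ ≤ r ^ 2 := this
  have hm2' : r ^ 2 ≤ m ^ 2 := by nlinarith
  have h4lo : (1 : ℝ) / m ^ 4 ≤ (r ^ 2) ^ 2 := by
    calc (1 : ℝ) / m ^ 4 = (1 / m ^ 2) ^ 2 := by ring
    _ ≤ (r ^ 2) ^ 2 := pow_le_pow_left₀ (by positivity) hm2 2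
  have h4hi : (r ^ 2) ^ 2 ≤ m ^ 4 := by nlinarith
  have hinv : (1 : ℝ) / m ^ 4 ≤ ((r ^ 2) ^ 2)⁻¹ := by
    rw [← one_div]
    exact one_div_le_one_div_of_le (by positivity) h4hi
  have g1 : ((r ^ 2)⁻¹ * A) ^ 2 = ((r ^ 2) ^ 2)⁻¹ * A ^ 2 := by
    rw [mul_pow, inv_pow]
  have g2 : (r ^ 2 * C) ^ 2 = (r ^ 2) ^ 2 * C ^ 2 := by rw [mul_pow]
  have p1 : 1 / m ^ 4 * A ^ 2 ≤ ((r ^ 2) ^ 2)⁻¹ * A ^ 2 :=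
    mul_le_mul_of_nonneg_right hinv (sq_nonneg A)
  have p2 : 1 / m ^ 4 * C ^ 2 ≤ (r ^ 2) ^ 2 * C ^ 2 :=
    mul_le_mul_of_nonneg_right h4lo (sq_nonneg C)
  have hm4 : (0 : ℝ) < 1 / m ^ 4 := by positivity
  rw [g1, g2]
  calc 3 / (4 * m ^ 4) * (A ^ 2 + B ^ 2) = 1 / m ^ 4 * (3 / 4 * (A ^ 2 + B ^ 2)) := by ring
  _ ≤ 1 / m ^ 4 * (A ^ 2 + C ^ 2) := mul_le_mul_of_nonneg_left key hm4.le
  _ = 1 / m ^ 4 * A ^ 2 + 1 / m ^ 4 * C ^ 2 := by ring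
  _ ≤ ((r ^ 2) ^ 2)⁻¹ * A ^ 2 + (r ^ 2) ^ 2 * C ^ 2 := add_le_add p1 p2
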